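/- Let p be an odd prime with p ≡ 3 (mod 4), m = 2s with s an odd positive integer and gcd(m,p) = 1, q = p^m, d = (q−1)/(p+1), α a primitive element of F_q, and D = {x ∈ F_q^* : Tr_{q/p}(x^d) = 0}. For a ∈ F_q^*, write a ∈ C_δ^{(p+1,q)} with 0 ≤ δ ≤ p, and let c(a) = (Tr_{q/p}(a x))_{x ∈ D}. Then the Hamming weight of c(a) equals p^{s−1}(2p^s − p + 1)(p − 1)/(p+1) if Tr_{q/p}(α^{−dδ}) = 0, and equals 2p^{s−1}(p^s + 1)(p − 1)/(p+1) if Tr_{q/p}(α^{−dδ}) ≠ 0. In particular, C_D is a two-weight code. -/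

import Mathlib

open scoped Classical

open Finset Polynomial

section Aux

variable {p : ℕ} [Fact p.Prime] {F : Type*} [Field F] [Fintype F] [Algebra (ZMod p) F]
  [CharP F p]

private noncomputable def frobAE (p : ℕ) [Fact p.Prime] (F : Type*) [Field F] [Fintype F]
    [Algebra (ZMod p) F] [CharP F p] : F ≃ₐ[ZMod p] F :=
  AlgEquiv.ofBijective
    { toRingHom := frobenius F p,
      commutes' := fun c => by
        show frobenius F p (algebraMap (ZMod p) F c) = algebraMap (ZMod p) F c
        rw [frobenius_def, ← map_pow, ZMod.pow_card] }
    (Finite.injective_iff_bijective.mp (frobenius F p).injective)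

private lemma frobAE_pow_apply (i : ℕ) (x : F) : ((frobAE p F) ^ i) x = x ^ (p ^ i) := by
  induction i generalizing x with
  | zero => simp
  | succ n ih =>
    rw [pow_succ]
    show ((frobAE p F) ^ n) ((frobAE p F) x) = _
    have hx : (frobAE p F) x = x ^ p := rfl
    rw [hx, ih (x ^ p), ← pow_mul, pow_succ, mul_comm (p ^ n) p, pow_mul]

/-- The trace of a finite field as a sum of Frobenius powers. -/
lemma trace_pow_sum {m : ℕ} (hm2 : 2 ≤ m) (hF : Fintype.card F = p ^ m)
    {α : F} (hα : orderOf α = p ^ m - 1) (x : F) :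
    algebraMap (ZMod p) F (Algebra.trace (ZMod p) F x) = ∑ i ∈ range m, x ^ (p ^ i) := by
  have hp2 : 2 ≤ p := (Fact.out : p.Prime).two_le
  have hα0 : α ≠ 0 := by
    intro h
    have h1 : α ^ (p ^ m - 1) = 1 := hα ▸ pow_orderOf_eq_one α
    have h2 : (1 : ℕ) ≤ p ^ m - 1 := by
      have : 4 ≤ p ^ m := by
        calc 4 = 2 ^ 2 := rfl
        _ ≤ p ^ m := Nat.pow_le_pow_left hp2 2 |>.trans (Nat.pow_le_pow_right (by omega) hm2)
      omega
    rw [h, zero_pow (by omega)] at h1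
    exact zero_ne_one h1
  have hcard : Fintype.card (F ≃ₐ[ZMod p] F) = m := by
    rw [← Nat.card_eq_fintype_card, IsGalois.card_aut_eq_finrank]
    have h1 : Fintype.card F = p ^ Module.finrank (ZMod p) F := by
      have := Module.card_eq_pow_finrank (K := ZMod p) (V := F)
      rwa [ZMod.card] at this
    exact (Nat.pow_right_injective hp2 (h1.symm.trans hF))
  have hlt : ∀ k : Fin m, p ^ (k : ℕ) ≤ p ^ (m - 1) := fun k =>
    Nat.pow_le_pow_right (by omega) (by omega)
  have hlt2 : p ^ (m - 1) < p ^ m - 1 := by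
    have h6 : p ^ (m - 1) * p = p ^ m := by
      rw [← pow_succ]; congr 1; omega
    have h5 : p ^ (m - 1) * 2 ≤ p ^ (m - 1) * p := Nat.mul_le_mul_left _ hp2
    have h7 : 1 < p ^ (m - 1) := Nat.one_lt_pow (by omega) hp2
    omega
  have hinj : Function.Injective (fun i : Fin m => (frobAE p F) ^ (i : ℕ)) := by
    have key : ∀ i j : Fin m, (i : ℕ) ≤ (j : ℕ) →
        (frobAE p F) ^ (i : ℕ) = (frobAE p F) ^ (j : ℕ) → i = j := by
      intro i j hij hfe
      have h1 : α ^ (p ^ (i : ℕ)) = α ^ (p ^ (j : ℕ)) := by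
        have := congrArg (fun σ : F ≃ₐ[ZMod p] F => σ α) hfe
        simpa [frobAE_pow_apply] using this
      have hple : p ^ (i : ℕ) ≤ p ^ (j : ℕ) := Nat.pow_le_pow_right (by omega) hij
      have h2 : α ^ (p ^ (j : ℕ) - p ^ (i : ℕ)) * α ^ (p ^ (i : ℕ)) = 1 * α ^ (p ^ (i : ℕ)) := by
        rw [← pow_add, one_mul, Nat.sub_add_cancel hple, h1]
      have h3 : α ^ (p ^ (j : ℕ) - p ^ (i : ℕ)) = 1 :=
        mul_right_cancel₀ (pow_ne_zero _ hα0) h2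
      have h4 : orderOf α ∣ p ^ (j : ℕ) - p ^ (i : ℕ) := orderOf_dvd_of_pow_eq_one h3
      rw [hα] at h4
      have h5 : p ^ (j : ℕ) - p ^ (i : ℕ) < p ^ m - 1 := by
        have := hlt j; have := hlt i; omega
      have h6 : p ^ (j : ℕ) - p ^ (i : ℕ) = 0 := by
        rcases Nat.eq_zero_or_pos (p ^ (j : ℕ) - p ^ (i : ℕ)) with h | h
        · exact h
        · exact absurd (Nat.le_of_dvd h h4) (by omega)
      have : p ^ (i : ℕ) = p ^ (j : ℕ) := by omega
      exact Fin.ext (Nat.pow_right_injective hp2 this)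
    intro i j hij
    rcases le_total (i : ℕ) (j : ℕ) with h | h
    · exact key i j h hij
    · exact (key j i h hij.symm).symm
  have hbij : Function.Bijective (fun i : Fin m => (frobAE p F) ^ (i : ℕ)) := by
    rw [Fintype.bijective_iff_injective_and_card]
    exact ⟨hinj, by simp [hcard]⟩
  rw [trace_eq_sum_automorphisms]
  rw [← Function.Bijective.sum_comp hbij (fun σ => σ x)]
  rw [← Fin.sum_univ_eq_sum_range (fun i => x ^ (p ^ i)) m]
  exact Finset.sum_congr rfl (fun i _ => frobAE_pow_apply i x)

/-- Count of solutions of `x ^ n = c` in a finite field with a designated generator. -/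
lemma card_pow_eq_root {α : F} (hα : orderOf α = Fintype.card F - 1) {n : ℕ} (hn : 0 < n)
    (hdvd : n ∣ Fintype.card F - 1) {c : F} (hc : ∃ x₀ : F, x₀ ^ n = c) (hc0 : c ≠ 0) :
    (univ.filter fun x : F => x ^ n = c).card = n := by
  have hQ0 : 0 < Fintype.card F - 1 := by
    have := Fintype.one_lt_card (α := F)
    omega
  have hζ : IsPrimitiveRoot (α ^ ((Fintype.card F - 1) / n)) n := by
    have hdd : (Fintype.card F - 1) / n ∣ Fintype.card F - 1 := Nat.div_dvd_of_dvd hdvd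
    have ho : orderOf (α ^ ((Fintype.card F - 1) / n)) = n := by
      rw [orderOf_pow' _ (by
        intro h
        rw [h] at hdd
        simp only [Nat.zero_dvd] at hdd
        omega), hα, Nat.gcd_eq_right hdd, Nat.div_div_self hdvd (by omega)]
    have := IsPrimitiveRoot.orderOf (α ^ ((Fintype.card F - 1) / n))
    rwa [ho] at this
  have heq : (univ.filter fun x : F => x ^ n = c) = (nthRoots n c).toFinset := by
    ext x
    simp [Polynomial.mem_nthRoots hn]
  rw [heq, Multiset.toFinset_card_of_nodup (hζ.nthRoots_nodup hc0), hζ.card_nthRoots,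
    if_pos hc]

/-- fixed points of iterated Frobenius -/
private lemma fix_pow_pow {x : F} (hx : x ^ p = x) (n : ℕ) : x ^ (p ^ n) = x := by
  induction n with
  | zero => simp
  | succ k ih => rw [pow_succ, mul_comm, pow_mul, hx, ih]

/-- the partial Frobenius sum is additive -/
private lemma gsum_add (s : ℕ) (x y : F) :
    (∑ i ∈ range s, (x + y) ^ p ^ i) = (∑ i ∈ range s, x ^ p ^ i) + ∑ i ∈ range s, y ^ p ^ i := by
  rw [← Finset.sum_add_distrib]
  exact Finset.sum_congr rfl fun i _ => add_pow_char_pow ..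

private lemma gsum_sub (s : ℕ) (x y : F) :
    (∑ i ∈ range s, (x - y) ^ p ^ i) = (∑ i ∈ range s, x ^ p ^ i) - ∑ i ∈ range s, y ^ p ^ i := by
  rw [← Finset.sum_sub_distrib]
  exact Finset.sum_congr rfl fun i _ => sub_pow_char_pow ..

private lemma gsum_smul {s : ℕ} {l : F} (hl : l ^ p = l) (w : F) :
    (∑ i ∈ range s, (l * w) ^ p ^ i) = l * ∑ i ∈ range s, w ^ p ^ i := by
  rw [Finset.mul_sum]
  exact Finset.sum_congr rfl fun i _ => by rw [mul_pow, fix_pow_pow hl]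

/-- the partial Frobenius sum of an element of the subfield `R` is fixed by Frobenius -/
private lemma gsum_mem_P {s : ℕ} {w : F} (hw : w ^ p ^ s = w) :
    (∑ i ∈ range s, w ^ p ^ i) ^ p = ∑ i ∈ range s, w ^ p ^ i := by
  rw [sum_pow_char]
  have h1 := Finset.sum_range_succ (fun i => w ^ p ^ i) s
  have h2 := Finset.sum_range_succ' (fun i => w ^ p ^ i) s
  simp only [pow_zero, pow_one] at h1 h2
  have h3 : ∀ i : ℕ, (w ^ p ^ i) ^ p = w ^ p ^ (i + 1) := fun i => by
    rw [← pow_mul, ← pow_succ]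
  rw [Finset.sum_congr rfl fun i _ => h3 i]
  have h4 : (∑ i ∈ range s, w ^ p ^ (i + 1)) + w = (∑ i ∈ range s, w ^ p ^ i) + w ^ p ^ s := by
    rw [← h2, h1, hw]
  have := add_right_cancel (h4.trans (by rw [hw]))
  exact this

/-- Trace identity on the subfield fixed by `x ↦ x ^ p ^ s`. -/
lemma trace_on_R {s : ℕ} (hs0 : 0 < s) (hF : Fintype.card F = p ^ (2 * s))
    {α : F} (hα : orderOf α = p ^ (2 * s) - 1) (β : F) {z : F} (hz : z ^ p ^ s = z) :
    algebraMap (ZMod p) F (Algebra.trace (ZMod p) F (β * z)) =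
      ∑ i ∈ range s, ((β + β ^ p ^ s) * z) ^ p ^ i := by
  rw [trace_pow_sum (by omega) hF hα]
  have h0 : 2 * s = s + s := by omega
  rw [h0, Finset.sum_range_add]
  have h1 : ∀ i, (β * z) ^ p ^ (s + i) = (β ^ p ^ s * z) ^ p ^ i := by
    intro i
    rw [pow_add, pow_mul, mul_pow, hz, mul_pow]
  rw [Finset.sum_congr rfl fun i _ => h1 i, ← Finset.sum_add_distrib]
  exact Finset.sum_congr rfl fun i _ => by rw [add_mul, add_pow_char_pow]

/-- Cardinality of the kernel of the relative-trace-like map on the subfield. -/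
lemma ker_card {s : ℕ} (hs0 : 0 < s)
    (hRcard : (univ.filter fun z : F => z ^ p ^ s = z).card = p ^ s)
    (hPcard : (univ.filter fun x : F => x ^ p = x).card = p)
    {β' : F} (hβ0 : β' ≠ 0) (hβR : β' ^ p ^ s = β') :
    (univ.filter fun z : F => z ^ p ^ s = z ∧
      (∑ i ∈ range s, (β' * z) ^ p ^ i) = 0).card = p ^ (s - 1) := by
  have hp2 : 2 ≤ p := (Fact.out : p.Prime).two_le
  -- reduce to counting kernel of w ↦ gsum w on R
  have hsub : (univ.filter fun z : F => z ^ p ^ s = z ∧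
      (∑ i ∈ range s, (β' * z) ^ p ^ i) = 0).card =
      (univ.filter fun w : F => w ^ p ^ s = w ∧
      (∑ i ∈ range s, w ^ p ^ i) = 0).card := by
    refine Finset.card_bij (fun z _ => β' * z) ?_ ?_ ?_
    · intro z hz
      simp only [mem_filter, mem_univ, true_and] at hz ⊢
      exact ⟨by rw [mul_pow, hβR, hz.1], hz.2⟩
    · intro x hx y hy hxy
      exact mul_left_cancel₀ hβ0 hxy
    · intro w hw
      simp only [mem_filter, mem_univ, true_and] at hw
      refine ⟨β'⁻¹ * w, ?_, by field_simp⟩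
      simp only [mem_filter, mem_univ, true_and]
      constructor
      · rw [mul_pow, inv_pow, hβR, hw.1]
      · rw [← mul_assoc, mul_inv_cancel₀ hβ0, one_mul]
        exact hw.2
  rw [hsub]
  -- gsum is not identically zero on R
  have hex : ∃ w₀ : F, w₀ ^ p ^ s = w₀ ∧ (∑ i ∈ range s, w₀ ^ p ^ i) ≠ 0 := by
    by_contra hcon
    push_neg at hcon
    set f : F[X] := ∑ i ∈ range s, (X : F[X]) ^ p ^ i with hf
    have hfdeg : f.natDegree ≤ p ^ (s - 1) := by
      apply Polynomial.natDegree_sum_le_of_forall_le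
      intro i hi
      rw [Polynomial.natDegree_X_pow]
      exact Nat.pow_le_pow_right (by omega) (by simp at hi; omega)
    have hfne : f ≠ 0 := by
      intro h0
      have hc1 : f.coeff 1 = 1 := by
        rw [hf, Polynomial.finset_sum_coeff]
        have : ∀ i ∈ range s, ((X : F[X]) ^ p ^ i).coeff 1 = if i = 0 then 1 else 0 := by
          intro i hi
          rw [Polynomial.coeff_X_pow]
          by_cases h : i = 0
          · simp [h]
          · have : p ^ i ≠ 1 := by
              have : p ^ 1 ≤ p ^ i := Nat.pow_le_pow_right (by omega) (by omega)
              simp at this ⊢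
              omega
            simp [this.symm, Ne.symm this, h]
        rw [Finset.sum_congr rfl this, Finset.sum_ite_eq' (range s) 0 (fun _ => (1:F))]
        simp [hs0]
      rw [h0] at hc1
      simp at hc1
    have hzero : f = 0 := by
      apply Polynomial.eq_zero_of_natDegree_lt_card_of_eval_eq_zero' f
        (univ.filter fun z : F => z ^ p ^ s = z)
      · intro w hw
        simp only [mem_filter, mem_univ, true_and] at hw
        rw [hf]
        simp only [Polynomial.eval_finset_sum, Polynomial.eval_pow, Polynomial.eval_X]
        exact hcon w hw
      · rw [hRcard]
        calc f.natDegree ≤ p ^ (s - 1) := hfdeg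
        _ < p ^ s := Nat.pow_lt_pow_right (by omega) (by omega)
    exact hfne hzero
  obtain ⟨w₀, hw₀R, hw₀⟩ := hex
  set c : F := ∑ i ∈ range s, w₀ ^ p ^ i with hc
  have hcP : c ^ p = c := gsum_mem_P hw₀R
  -- fiberwise count
  have hfib := Finset.card_eq_sum_card_fiberwise
    (f := fun w : F => ∑ i ∈ range s, w ^ p ^ i)
    (s := univ.filter fun z : F => z ^ p ^ s = z)
    (t := univ.filter fun x : F => x ^ p = x)
    (fun w hw => by
      simp only [mem_coe, mem_filter, mem_univ, true_and] at hw ⊢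
      exact gsum_mem_P hw)
  -- each fiber has the same cardinality
  have hfibcard : ∀ t ∈ (univ.filter fun x : F => x ^ p = x),
      ((univ.filter fun z : F => z ^ p ^ s = z).filter
        (fun w => (∑ i ∈ range s, w ^ p ^ i) = t)).card =
      ((univ.filter fun z : F => z ^ p ^ s = z).filter
        (fun w => (∑ i ∈ range s, w ^ p ^ i) = 0)).card := by
    intro t ht
    simp only [mem_filter, mem_univ, true_and] at ht
    set l : F := t * c⁻¹ with hl
    have hlP : l ^ p = l := by
      rw [hl, mul_pow, ht, inv_pow, hcP]
    have hwtR : (l * w₀) ^ p ^ s = l * w₀ := by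
      rw [mul_pow, fix_pow_pow hlP, hw₀R]
    have hgwt : (∑ i ∈ range s, (l * w₀) ^ p ^ i) = t := by
      rw [gsum_smul hlP, ← hc, hl, mul_assoc, inv_mul_cancel₀ hw₀, mul_one]
    refine Finset.card_bij (fun w _ => w - l * w₀) ?_ ?_ ?_
    · intro w hw
      simp only [mem_filter, mem_univ, true_and] at hw ⊢
      refine ⟨by rw [sub_pow_char_pow, hwtR, hw.1], ?_⟩
      rw [gsum_sub, hw.2, hgwt, sub_self]
    · intro x hx y hy hxy
      exact sub_left_injective hxy
    · intro w hw
      simp only [mem_filter, mem_univ, true_and] at hw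
      refine ⟨w + l * w₀, ?_, by ring⟩
      simp only [mem_filter, mem_univ, true_and]
      refine ⟨by rw [add_pow_char_pow, hwtR, hw.1], ?_⟩
      rw [gsum_add, hw.2, hgwt, zero_add]
  rw [Finset.sum_congr rfl hfibcard, Finset.sum_const, hPcard, smul_eq_mul, hRcard] at hfib
  have hKK : ((univ.filter fun z : F => z ^ p ^ s = z).filter
      (fun w => (∑ i ∈ range s, w ^ p ^ i) = 0)) =
      (univ.filter fun w : F => w ^ p ^ s = w ∧ (∑ i ∈ range s, w ^ p ^ i) = 0) :=
    Finset.filter_filter _ _ _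
  rw [← hKK]
  have hps : p ^ s = p * p ^ (s - 1) := by
    rw [← pow_succ']; congr 1; omega
  exact Nat.eq_of_mul_eq_mul_left (show 0 < p by omega) (hfib.symm.trans hps)

/-- Trace criterion on the subgroup of `(p+1)`-st roots of unity. -/
lemma trace_mu {s : ℕ} (hs0 : 0 < s) (hpns : ¬ p ∣ s) (hF : Fintype.card F = p ^ (2 * s))
    {α : F} (hα : orderOf α = p ^ (2 * s) - 1) {u : F} (hu : u ^ (p + 1) = 1) :
    Algebra.trace (ZMod p) F u = 0 ↔ u ^ 2 = -1 := by
  have hp2 : 2 ≤ p := (Fact.out : p.Prime).two_le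
  have hu0 : u ≠ 0 := by
    intro h; rw [h, zero_pow (by omega)] at hu; exact zero_ne_one hu
  have hup2 : u ^ (p ^ 2) = u := by
    have he : p ^ 2 = (p + 1) * (p - 1) + 1 := by
      obtain ⟨pp, rfl⟩ : ∃ pp, p = pp + 2 := ⟨p - 2, by omega⟩
      have h1 : pp + 2 - 1 = pp + 1 := rfl
      rw [h1]; ring
    rw [he, pow_succ, pow_mul, hu, one_pow, one_mul]
  have heven : ∀ n : ℕ, u ^ (p ^ (2 * n)) = u := by
    intro n
    induction n with
    | zero => simp
    | succ k ih =>
      have h1 : 2 * (k + 1) = 2 + 2 * k := by omega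
      rw [h1, pow_add, mul_comm, pow_mul, ih, hup2]
  have hkey : ∀ n : ℕ, (∑ i ∈ range (2 * n), u ^ p ^ i) = n • (u + u ^ p) := by
    intro n
    induction n with
    | zero => simp
    | succ k ih =>
      have h1 : 2 * (k + 1) = (2 * k + 1) + 1 := by omega
      rw [h1, Finset.sum_range_succ, Finset.sum_range_succ, ih]
      have h2 : u ^ p ^ (2 * k) = u := heven k
      have h3 : u ^ p ^ (2 * k + 1) = u ^ p := by
        rw [pow_succ, pow_mul, heven k]
      rw [h2, h3, succ_nsmul]
      ring
  have htr : algebraMap (ZMod p) F (Algebra.trace (ZMod p) F u) = (s : ℕ) • (u + u ^ p) := by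
    rw [trace_pow_sum (by omega) hF hα, hkey]
  have hinj := (algebraMap (ZMod p) F).injective
  have hs_ne : ((s : ℕ) : F) ≠ 0 := by
    intro h
    exact hpns ((CharP.cast_eq_zero_iff F p s).mp h)
  have hmul : u * (u + u ^ p) = u ^ 2 + 1 := by
    rw [← hu]; ring
  constructor
  · intro h0
    have h1 : (s : ℕ) • (u + u ^ p) = 0 := by
      rw [← htr, h0, map_zero]
    rw [nsmul_eq_mul] at h1
    have h2 : u + u ^ p = 0 := by
      rcases mul_eq_zero.mp h1 with h | h
      · exact absurd h hs_ne
      · exact h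
    have h3 : u ^ 2 + 1 = 0 := by rw [← hmul, h2, mul_zero]
    exact eq_neg_of_add_eq_zero_left h3
  · intro h0
    have h3 : u ^ 2 + 1 = 0 := by rw [h0]; ring
    have h2 : u * (u + u ^ p) = 0 := by rw [hmul, h3]
    have h4 : u + u ^ p = 0 := by
      rcases mul_eq_zero.mp h2 with h | h
      · exact absurd h hu0
      · exact h
    apply hinj
    rw [map_zero, htr, h4, smul_zero]

end Aux


/-- for `p ≡ 3 (mod 4)`, `m = 2s` with `s` odd, `gcd(m,p) = 1`,
`q = p^m`, `d = (q-1)/(p+1)`, `α` a primitive element of `F_q` and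
`D = {x ∈ F_q^* : Tr_{q/p}(x^d) = 0}`: if `a ∈ C_δ^{(p+1,q)}` with `0 ≤ δ ≤ p`,
then the Hamming weight of `c(a) = (Tr_{q/p}(a x))_{x ∈ D}` is
`p^{s-1}(2p^s - p + 1)(p-1)/(p+1)` when `Tr_{q/p}(α^{-dδ}) = 0`, and
`2 p^{s-1}(p^s + 1)(p-1)/(p+1)` when `Tr_{q/p}(α^{-dδ}) ≠ 0`
(so `C_D` is a two-weight code). -/
theorem codeword_weights_p_three_mod_four
    (p m s : ℕ) (hp : p.Prime) (hodd : Odd p) (h4 : p % 4 = 3)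
    (hm : m = 2 * s) (hs : Odd s) (hs0 : 0 < s) (hmp : Nat.gcd m p = 1)
    (q d : ℕ) (hq : q = p ^ m) (hd : d = (q - 1) / (p + 1))
    (F : Type*) [Field F] [Fintype F] [Algebra (ZMod p) F]
    (hF : Fintype.card F = q)
    (α : F) (hα : orderOf α = q - 1)
    (D : Finset F)
    (hD : D = Finset.univ.filter fun x : F =>
      x ≠ 0 ∧ Algebra.trace (ZMod p) F (x ^ d) = 0)
    (a : F) (ha0 : a ≠ 0) (δ : ℕ) (hδ : δ ≤ p)
    (haδ : ∃ j : ℕ, a = α ^ (δ + (p + 1) * j)) :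
    (Algebra.trace (ZMod p) F (α ^ (-((d * δ : ℕ) : ℤ))) = 0 →
      hammingNorm (fun x : D => Algebra.trace (ZMod p) F (a * (x : F))) =
        p ^ (s - 1) * (2 * p ^ s - p + 1) * (p - 1) / (p + 1)) ∧
    (Algebra.trace (ZMod p) F (α ^ (-((d * δ : ℕ) : ℤ))) ≠ 0 →
      hammingNorm (fun x : D => Algebra.trace (ZMod p) F (a * (x : F))) =
        2 * p ^ (s - 1) * (p ^ s + 1) * (p - 1) / (p + 1)) := by
  haveI : Fact p.Prime := ⟨hp⟩
  haveI : CharP F p := charP_of_injective_algebraMap (algebraMap (ZMod p) F).injective p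
  subst hm hq
  have hp2 : 2 ≤ p := hp.two_le
  have hp3 : 3 ≤ p := by omega
  have hpns : ¬ p ∣ s := by
    intro hps
    have h1 : p ∣ 2 * s := Dvd.dvd.mul_left hps 2
    have h2 : p ∣ Nat.gcd (2 * s) p := Nat.dvd_gcd h1 dvd_rfl
    rw [hmp] at h2
    have := Nat.le_of_dvd one_pos h2
    omega
  have hp3s : 3 ≤ p ^ s := le_trans hp3 (Nat.le_self_pow (by omega) p)
  have hps1 : 1 ≤ p ^ (s - 1) := Nat.one_le_pow _ _ (by omega)
  have hpss : p ^ (s - 1) ≤ p ^ s := Nat.pow_le_pow_right (by omega) (by omega)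
  have hq4 : p ^ s * p ^ s ≤ p ^ (2 * s) := by
    rw [two_mul, pow_add]
  have hq4' : 9 ≤ p ^ (2 * s) := le_trans (Nat.mul_le_mul hp3s hp3s) hq4
  have hZdvd2 : (p ^ s - 1) ∣ p ^ (2 * s) - 1 := by
    have := Nat.sub_dvd_pow_sub_pow (p ^ s) 1 2
    rwa [one_pow, ← pow_mul, mul_comm s 2] at this
  have hq2 : p ^ (2 * s) - 1 = (p ^ s - 1) * (p ^ s + 1) := by
    have h2 : p ^ (2 * s) = p ^ s * p ^ s := by rw [two_mul, pow_add]
    rw [h2]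
    have h1 : 1 ≤ p ^ s := by omega
    zify [h1, Nat.one_le_two_pow.trans (by omega : 2 ^ 1 ≤ p ^ s) ]
    zify [show 1 ≤ p ^ s * p ^ s by nlinarith]
    ring
  have hts : (p + 1) ∣ p ^ s + 1 := by
    have h1 : ((p : ℤ) + 1) ∣ (p : ℤ) ^ s + 1 := by
      have h2 : (p : ℤ) ^ s + 1 = (p : ℤ) ^ s - (-1 : ℤ) ^ s := by
        rw [Odd.neg_one_pow hs]; ring
      rw [h2]
      have h3 := sub_dvd_pow_sub_pow (p : ℤ) (-1) s
      simpa using h3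
    have h4 : ((p + 1 : ℕ) : ℤ) ∣ ((p ^ s + 1 : ℕ) : ℤ) := by push_cast; exact h1
    exact_mod_cast h4
  set t := (p ^ s + 1) / (p + 1) with htdef
  have ht : (p + 1) * t = p ^ s + 1 := Nat.mul_div_cancel' hts
  have hq1 : (p + 1) * d = p ^ (2 * s) - 1 := by
    rw [hd]
    refine Nat.mul_div_cancel' ?_
    rw [hq2, ← ht]
    exact ⟨(p ^ s - 1) * t, by ring⟩
  have hdt : d = (p ^ s - 1) * t := by
    have h1 : (p + 1) * d = (p + 1) * ((p ^ s - 1) * t) := by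
      rw [hq1, hq2, ← ht]; ring
    exact Nat.eq_of_mul_eq_mul_left (by omega) h1
  have ht1 : 1 ≤ t := by
    rcases Nat.eq_zero_or_pos t with h | h
    · rw [h, mul_zero] at ht; omega
    · exact h
  have hd0 : 0 < d := by
    rw [hdt]; exact Nat.mul_pos (by omega) ht1
  obtain ⟨k4, hk4⟩ : ∃ k4, p + 1 = 4 * k4 := ⟨(p + 1) / 4, by omega⟩
  have hk41 : 1 ≤ k4 := by omega
  have h2d : 2 * d = (p ^ s - 1) * (2 * t) := by rw [hdt]; ring
  have h2d0 : 2 * d ≠ 0 := by omega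
  have hα0 : α ≠ 0 := by
    intro h
    have h1 : α ^ (p ^ (2 * s) - 1) = 1 := hα ▸ pow_orderOf_eq_one α
    rw [h, zero_pow (by omega)] at h1
    exact zero_ne_one h1
  have hαpow : α ^ (p ^ (2 * s) - 1) = 1 := hα ▸ pow_orderOf_eq_one α
  have hcard1 : Fintype.card F - 1 = p ^ (2 * s) - 1 := by rw [hF]
  have hα' : orderOf α = Fintype.card F - 1 := by rw [hcard1, hα]
  have hneg : ∀ e : ℕ, 0 < e → 2 * e = p ^ (2 * s) - 1 → α ^ e = -1 := by
    intro e he h2e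
    have h1 : α ^ e * α ^ e = 1 := by
      rw [← pow_add, show e + e = p ^ (2 * s) - 1 from by omega, hαpow]
    rcases mul_self_eq_one_iff.mp h1 with h | h
    · exfalso
      have h2 := orderOf_dvd_of_pow_eq_one h
      rw [hα] at h2
      have := Nat.le_of_dvd he h2
      omega
    · exact h
  have hneg1 : α ^ (2 * k4 * d) = -1 := by
    apply hneg _ (by positivity)
    rw [← hq1, hk4]; ring
  have ha2d : a ^ (2 * d) = α ^ (2 * d * δ) := by
    obtain ⟨j, haj⟩ := haδ
    rw [haj, ← pow_mul]
    have he1 : (δ + (p + 1) * j) * (2 * d) = 2 * d * δ + (p ^ (2 * s) - 1) * (2 * j) := by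
      rw [← hq1]; ring
    rw [he1, pow_add]
    have h2 : α ^ ((p ^ (2 * s) - 1) * (2 * j)) = 1 := by
      rw [pow_mul, hαpow, one_pow]
    rw [h2, mul_one]
  set b : F := -(a ^ (2 * d)) with hbdef
  have hb0 : b ≠ 0 := neg_ne_zero.mpr (pow_ne_zero _ ha0)
  have hcaseiff : Algebra.trace (ZMod p) F (α ^ (-((d * δ : ℕ) : ℤ))) = 0 ↔ b = 1 := by
    have hv : (α : F) ^ (-((d * δ : ℕ) : ℤ)) = (α ^ (d * δ))⁻¹ := by
      rw [zpow_neg, zpow_natCast]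
    have hu1 : ((α ^ (d * δ))⁻¹) ^ (p + 1) = 1 := by
      rw [inv_pow, ← pow_mul, show d * δ * (p + 1) = (p ^ (2 * s) - 1) * δ from by
        rw [← hq1]; ring, pow_mul, hαpow, one_pow, inv_one]
    rw [hv, trace_mu hs0 hpns hF hα hu1]
    rw [inv_pow, ← pow_mul, show d * δ * 2 = 2 * d * δ from by ring, ← ha2d]
    constructor
    · intro h
      rw [hbdef]
      rw [inv_eq_iff_eq_inv] at h
      rw [h]
      norm_num
    · intro h
      rw [hbdef] at h
      have h2 : a ^ (2 * d) = -1 := by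
        have := congrArg Neg.neg h
        rwa [neg_neg] at this
      rw [h2]
      norm_num
  have hDD : ∀ x : F, x ∈ D ↔ x ^ (2 * d) = -1 := by
    intro x
    have hude : d * (p + 1) = p ^ (2 * s) - 1 := by rw [← hq1]; ring
    rw [hD, mem_filter]
    simp only [mem_univ, true_and]
    constructor
    · rintro ⟨hx0, htr⟩
      have hu1 : (x ^ d) ^ (p + 1) = 1 := by
        rw [← pow_mul, hude]
        have := FiniteField.pow_card_sub_one_eq_one x hx0
        rwa [hcard1] at this
      have h2 := (trace_mu hs0 hpns hF hα hu1).mp htr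
      rwa [← pow_mul, show d * 2 = 2 * d from by ring] at h2
    · intro hx
      have hx0 : x ≠ 0 := by
        intro h
        rw [h, zero_pow h2d0] at hx
        exact neg_ne_zero.mpr one_ne_zero hx.symm
      refine ⟨hx0, ?_⟩
      have hu1 : (x ^ d) ^ (p + 1) = 1 := by
        rw [← pow_mul, hude]
        have := FiniteField.pow_card_sub_one_eq_one x hx0
        rwa [hcard1] at this
      refine (trace_mu hs0 hpns hF hα hu1).mpr ?_
      rwa [← pow_mul, show d * 2 = 2 * d from by ring]
  -- basic counts
  have hZc : (univ.filter fun z : F => z ^ (p ^ s - 1) = 1).card = p ^ s - 1 :=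
    card_pow_eq_root hα' (by omega) (hcard1 ▸ hZdvd2) ⟨1, one_pow _⟩ one_ne_zero
  have hSbc : (univ.filter fun y : F => y ^ (2 * d) = b).card = 2 * d := by
    refine card_pow_eq_root hα' (by omega) ?_ ⟨α ^ (k4 + δ), ?_⟩ hb0
    · rw [hcard1, ← hq1, hk4]
      exact ⟨2 * k4, by ring⟩
    · rw [← pow_mul, show (k4 + δ) * (2 * d) = 2 * k4 * d + 2 * d * δ from by ring,
        pow_add, hneg1, hbdef, ha2d]
      ring
  have hfix_count : ∀ n : ℕ, 2 ≤ n → (n - 1) ∣ Fintype.card F - 1 →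
      (univ.filter fun z : F => z ^ n = z).card = n := by
    intro n hn hdvd
    have hZn : (univ.filter fun z : F => z ^ (n - 1) = 1).card = n - 1 :=
      card_pow_eq_root hα' (by omega) hdvd ⟨1, one_pow _⟩ one_ne_zero
    have hsplit : (univ.filter fun z : F => z ^ n = z)
        = insert (0 : F) (univ.filter fun z : F => z ^ (n - 1) = 1) := by
      ext x
      simp only [mem_filter, mem_univ, true_and, mem_insert]
      constructor
      · intro hx
        rcases eq_or_ne x 0 with h0 | h0
        · exact Or.inl h0
        · right
          have h1 : x ^ (n - 1) * x = 1 * x := by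
            rw [one_mul, ← pow_succ, show n - 1 + 1 = n from by omega, hx]
          exact mul_right_cancel₀ h0 h1
      · rintro (rfl | hx)
        · rw [zero_pow (by omega)]
        · rw [show n = (n - 1) + 1 from by omega, pow_succ, hx, one_mul]
    rw [hsplit, Finset.card_insert_of_notMem (by
        simp only [mem_filter, mem_univ, true_and]
        rw [zero_pow (by omega)]
        exact fun h => zero_ne_one h), hZn]
    omega
  have hRc : (univ.filter fun z : F => z ^ p ^ s = z).card = p ^ s :=
    hfix_count (p ^ s) (by omega) (by rw [hcard1]; exact hZdvd2)
  have hPc : (univ.filter fun x : F => x ^ p = x).card = p := by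
    refine hfix_count p (by omega) ?_
    rw [hcard1]
    have := Nat.sub_dvd_pow_sub_pow p 1 (2 * s)
    rwa [one_pow] at this
  have halg_inj := (algebraMap (ZMod p) F).injective
  have hWne : ∀ y : F, ¬ (Algebra.trace (ZMod p) F y = 0) → ¬ (y + y ^ p ^ s = 0) := by
    intro y hTr hsum0
    apply hTr
    apply halg_inj
    rw [map_zero]
    have h1 := trace_on_R (p := p) hs0 hF hα y (one_pow (p ^ s))
    simp only [mul_one] at h1
    rw [hsum0] at h1
    rw [h1]
    exact Finset.sum_eq_zero fun i _ => zero_pow (pow_ne_zero i (by omega))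
  have hZfacts : ∀ z : F, z ^ (p ^ s - 1) = 1 →
      z ≠ 0 ∧ z ^ p ^ s = z ∧ z ^ (2 * d) = 1 := by
    intro z hz
    have hz0 : z ≠ 0 := by
      intro h
      rw [h, zero_pow (by omega)] at hz
      exact zero_ne_one hz
    refine ⟨hz0, ?_, ?_⟩
    · rw [show p ^ s = (p ^ s - 1) + 1 from by omega, pow_succ, hz, one_mul]
    · rw [h2d, pow_mul, hz, one_pow]
  -- sets
  set Z : Finset F := univ.filter fun z : F => z ^ (p ^ s - 1) = 1 with hZdef
  set W : Finset F := univ.filter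
    (fun y : F => y ^ (2 * d) = b ∧ ¬ (Algebra.trace (ZMod p) F y = 0)) with hWdef
  set Sb : Finset F := univ.filter fun y : F => y ^ (2 * d) = b with hSbdef
  set S' : Finset F := Sb.filter fun y : F => ¬ (y + y ^ p ^ s = 0) with hS'def
  set T : Finset (F × F) := univ.filter (fun w : F × F =>
      (w.1 ^ (2 * d) = b ∧ ¬ (w.1 + w.1 ^ p ^ s = 0)) ∧ w.2 ^ (p ^ s - 1) = 1 ∧
      ¬ (Algebra.trace (ZMod p) F (w.1 * w.2) = 0)) with hTdef
  -- step: hammingNorm = W.card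
  have hnorm : hammingNorm (fun x : D => Algebra.trace (ZMod p) F (a * (x : F))) = W.card := by
    simp only [hammingNorm, ne_eq]
    refine Finset.card_bij (fun (x : {y // y ∈ D}) _ => a * (x : F)) ?_ ?_ ?_
    · intro x hx
      simp only [mem_filter, mem_univ, true_and] at hx
      rw [hWdef, mem_filter]
      refine ⟨mem_univ _, ?_, hx⟩
      rw [mul_pow, (hDD (x : F)).mp x.2, mul_neg, mul_one, hbdef]
    · intro x hx y hy hxy
      exact Subtype.ext (mul_left_cancel₀ ha0 hxy)
    · intro y hy
      rw [hWdef, mem_filter] at hy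
      obtain ⟨-, hyb, hytr⟩ := hy
      have hxD : a⁻¹ * y ∈ D := by
        rw [hDD]
        rw [mul_pow, inv_pow, hyb, hbdef, mul_neg, inv_mul_cancel₀ (pow_ne_zero _ ha0)]
      refine ⟨⟨a⁻¹ * y, hxD⟩, ?_, ?_⟩
      · simp only [mem_filter, mem_univ, true_and]
        rw [mul_inv_cancel_left₀ ha0]
        exact hytr
      · show a * (a⁻¹ * y) = y
        rw [mul_inv_cancel_left₀ ha0]
  -- fiberwise counting over products
  have hmapsW : ∀ w : F × F, w ∈ T → w.1 * w.2 ∈ W := by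
    intro w hw
    rw [hTdef, mem_filter] at hw
    obtain ⟨-, ⟨hw1b, hw1'⟩, hw2, hwtr⟩ := hw
    rw [hWdef, mem_filter]
    refine ⟨mem_univ _, ?_, hwtr⟩
    rw [mul_pow, hw1b, (hZfacts _ hw2).2.2, mul_one]
  have h3a : T.card = W.card * (p ^ s - 1) := by
    rw [Finset.card_eq_sum_card_fiberwise hmapsW]
    have hfib : ∀ y ∈ W, (T.filter fun w => w.1 * w.2 = y).card = p ^ s - 1 := by
      intro y hy
      rw [hWdef, mem_filter] at hy
      obtain ⟨-, hyb, hytr⟩ := hy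
      have hy' : ¬ (y + y ^ p ^ s = 0) := hWne y hytr
      have hbij : Z.card = (T.filter fun w => w.1 * w.2 = y).card := by
        refine Finset.card_bij (fun z _ => (y * z⁻¹, z)) ?_ ?_ ?_
        · intro z hz
          rw [hZdef, mem_filter] at hz
          obtain ⟨-, hz1⟩ := hz
          obtain ⟨hz0, hzR, hz2d⟩ := hZfacts z hz1
          rw [mem_filter]
          constructor
          · rw [hTdef, mem_filter]
            refine ⟨mem_univ _, ⟨?_, ?_⟩, hz1, ?_⟩
            · rw [mul_pow, hyb, inv_pow, hz2d, inv_one, mul_one]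
            · have hzinv : (z⁻¹) ^ p ^ s = z⁻¹ := by rw [inv_pow, hzR]
              have heq : y * z⁻¹ + (y * z⁻¹) ^ p ^ s = (y + y ^ p ^ s) * z⁻¹ := by
                rw [mul_pow, hzinv]; ring
              rw [heq]
              exact fun hcon => hy' (by
                rcases mul_eq_zero.mp hcon with h | h
                · exact h
                · exact absurd h (inv_ne_zero hz0))
            · rw [mul_assoc, inv_mul_cancel₀ hz0, mul_one]
              exact hytr
          · show (y * z⁻¹) * z = y
            rw [mul_assoc, inv_mul_cancel₀ hz0, mul_one]
        · intro z1 h1 z2 h2 he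
          exact congrArg Prod.snd he
        · intro w hw
          rw [mem_filter] at hw
          obtain ⟨hwT, hwy⟩ := hw
          rw [hTdef, mem_filter] at hwT
          obtain ⟨-, -, hw2, -⟩ := hwT
          have hz0 : w.2 ≠ 0 := (hZfacts _ hw2).1
          refine ⟨w.2, ?_, ?_⟩
          · rw [hZdef, mem_filter]; exact ⟨mem_univ _, hw2⟩
          · have h1 : w.1 = y * w.2⁻¹ := by
              rw [← hwy, mul_assoc, mul_inv_cancel₀ hz0, mul_one]
            show (y * w.2⁻¹, w.2) = w
            rw [← h1]
      rw [← hbij]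
      exact hZc
    rw [Finset.sum_congr rfl hfib, Finset.sum_const, smul_eq_mul]
  have hmapsS : ∀ w : F × F, w ∈ T → w.1 ∈ S' := by
    intro w hw
    rw [hTdef, mem_filter] at hw
    obtain ⟨-, ⟨h1, h2⟩, -, -⟩ := hw
    rw [hS'def, mem_filter, hSbdef, mem_filter]
    exact ⟨⟨mem_univ _, h1⟩, h2⟩
  have h3b : T.card = S'.card * (p ^ s - p ^ (s - 1)) := by
    rw [Finset.card_eq_sum_card_fiberwise hmapsS]
    have hfib2 : ∀ β ∈ S', (T.filter fun w => w.1 = β).card = p ^ s - p ^ (s - 1) := by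
      intro β hβ
      rw [hS'def, mem_filter, hSbdef, mem_filter] at hβ
      obtain ⟨⟨-, hβb⟩, hβ'⟩ := hβ
      have hfib_eq : (T.filter fun w => w.1 = β).card
          = (Z.filter fun z => ¬ (Algebra.trace (ZMod p) F (β * z) = 0)).card := by
        refine Finset.card_bij (fun w _ => w.2) ?_ ?_ ?_
        · intro w hw
          rw [mem_filter] at hw
          obtain ⟨hwT, hwfst⟩ := hw
          rw [hTdef, mem_filter] at hwT
          obtain ⟨-, -, hw2, hwtr⟩ := hwT
          rw [mem_filter, hZdef, mem_filter]
          rw [hwfst] at hwtr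
          exact ⟨⟨mem_univ _, hw2⟩, hwtr⟩
        · intro w1 h1 w2 h2 he
          rw [mem_filter] at h1 h2
          have hh1 := h1.2
          have hh2 := h2.2
          have : w1.1 = w2.1 := by rw [hh1, hh2]
          exact Prod.ext this he
        · intro z hz
          rw [mem_filter] at hz
          obtain ⟨hzZ, hztr⟩ := hz
          rw [hZdef, mem_filter] at hzZ
          refine ⟨(β, z), ?_, rfl⟩
          rw [mem_filter, hTdef, mem_filter]
          exact ⟨⟨mem_univ _, ⟨hβb, hβ'⟩, hzZ.2, hztr⟩, rfl⟩
      rw [hfib_eq]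
      -- count via the kernel lemma
      have hcardβ : β ^ p ^ (2 * s) = β := by
        have h1 := FiniteField.pow_card β
        rwa [hF] at h1
      have hβ'R : (β + β ^ p ^ s) ^ p ^ s = β + β ^ p ^ s := by
        have h1 : (β ^ p ^ s) ^ p ^ s = β := by
          rw [← pow_mul, ← pow_add, ← two_mul, hcardβ]
        rw [add_pow_char_pow, h1, add_comm]
      have hker := ker_card hs0 hRc hPc hβ' hβ'R
      have hZ0eq : (Z.filter fun z => Algebra.trace (ZMod p) F (β * z) = 0)
          = (univ.filter fun z : F => z ^ p ^ s = z ∧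
              (∑ i ∈ range s, ((β + β ^ p ^ s) * z) ^ p ^ i) = 0).erase 0 := by
        ext z
        simp only [hZdef, Finset.mem_erase, mem_filter, mem_univ, true_and]
        constructor
        · rintro ⟨hz1, hztr⟩
          obtain ⟨hz0, hzR, -⟩ := hZfacts z hz1
          refine ⟨hz0, hzR, ?_⟩
          have h1 := trace_on_R (p := p) hs0 hF hα β hzR
          rw [hztr, map_zero] at h1
          exact h1.symm
        · rintro ⟨hz0, hzR, hg0⟩
          have hz1 : z ^ (p ^ s - 1) = 1 := by
            have h1 : z ^ (p ^ s - 1) * z = 1 * z := by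
              rw [one_mul, ← pow_succ, show p ^ s - 1 + 1 = p ^ s from by omega, hzR]
            exact mul_right_cancel₀ hz0 h1
          refine ⟨hz1, ?_⟩
          apply halg_inj
          rw [map_zero, trace_on_R (p := p) hs0 hF hα β hzR, hg0]
      have h0mem : (0 : F) ∈ (univ.filter fun z : F => z ^ p ^ s = z ∧
          (∑ i ∈ range s, ((β + β ^ p ^ s) * z) ^ p ^ i) = 0) := by
        rw [mem_filter]
        refine ⟨mem_univ _, by rw [zero_pow (by omega)], ?_⟩
        exact Finset.sum_eq_zero fun i _ => by
          rw [mul_zero, zero_pow (pow_ne_zero i (by omega))]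
      have hZ0c : (Z.filter fun z => Algebra.trace (ZMod p) F (β * z) = 0).card
          = p ^ (s - 1) - 1 := by
        rw [hZ0eq, Finset.card_erase_of_mem h0mem, hker]
      have hZsplit := Finset.card_filter_add_card_filter_not
        (s := Z) (p := fun z => Algebra.trace (ZMod p) F (β * z) = 0)
      rw [hZ0c] at hZsplit
      have hZcc : Z.card = p ^ s - 1 := hZc
      omega
    rw [Finset.sum_congr rfl hfib2, Finset.sum_const, smul_eq_mul]
  -- the exceptional coset
  have hychar : ∀ y : F, y ^ (2 * d) = b → (y + y ^ p ^ s = 0 ↔ y ^ (p ^ s - 1) = -1) := by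
    intro y hyb
    have hyne : y ≠ 0 := by
      intro h
      rw [h, zero_pow h2d0] at hyb
      exact hb0 hyb.symm
    have hfact : y + y ^ p ^ s = y * (1 + y ^ (p ^ s - 1)) := by
      rw [mul_add, mul_one, ← pow_succ', show p ^ s - 1 + 1 = p ^ s from by omega]
    constructor
    · intro h0
      rw [hfact] at h0
      rcases mul_eq_zero.mp h0 with h | h
      · exact absurd h hyne
      · exact eq_neg_of_add_eq_zero_right h
    · intro h1
      rw [hfact, h1]
      ring
  have hEc : (Sb.filter fun y : F => y + y ^ p ^ s = 0).card
      = if b = 1 then p ^ s - 1 else 0 := by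
    by_cases hb1 : b = 1
    · rw [if_pos hb1]
      have hEeq : (Sb.filter fun y : F => y + y ^ p ^ s = 0)
          = univ.filter fun y : F => y ^ (p ^ s - 1) = -1 := by
        ext y
        rw [mem_filter, hSbdef, mem_filter, mem_filter]
        simp only [mem_univ, true_and]
        constructor
        · rintro ⟨hyb, hy0⟩
          exact (hychar y hyb).mp hy0
        · intro hy
          have hyb : y ^ (2 * d) = b := by
            rw [h2d, pow_mul, hy, hb1]
            exact Even.neg_one_pow (even_two_mul t)
          exact ⟨hyb, (hychar y hyb).mpr hy⟩
      rw [hEeq]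
      exact card_pow_eq_root hα' (by omega) (hcard1 ▸ hZdvd2)
        ⟨α ^ (2 * k4 * t), by
          rw [← pow_mul, show 2 * k4 * t * (p ^ s - 1) = 2 * k4 * d from by rw [hdt]; ring,
            hneg1]⟩
        (neg_ne_zero.mpr one_ne_zero)
    · rw [if_neg hb1, Finset.card_eq_zero, Finset.filter_eq_empty_iff]
      intro y hySb hy0
      apply hb1
      rw [hSbdef, mem_filter] at hySb
      have hyy := (hychar y hySb.2).mp hy0
      rw [← hySb.2, h2d, pow_mul, hyy]
      exact Even.neg_one_pow (even_two_mul t)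
  have hsplitSb := Finset.card_filter_add_card_filter_not
    (s := Sb) (p := fun y : F => y + y ^ p ^ s = 0)
  rw [hEc, ← hS'def] at hsplitSb
  have hSbcc : Sb.card = 2 * d := hSbc
  have hssN : p ^ s = p * p ^ (s - 1) := by
    rw [← pow_succ']; congr 1; omega
  have htN : (p + 1) * t = p * p ^ (s - 1) + 1 := by rw [← hssN]; exact ht
  have htZ : ((p : ℤ) + 1) * (t : ℤ) = (p : ℤ) * (p : ℤ) ^ (s - 1) + 1 := by
    exact_mod_cast htN
  constructor
  · intro hTr0
    have hb1 : b = 1 := hcaseiff.mp hTr0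
    rw [if_pos hb1] at hsplitSb
    have hS'c : S'.card = (p ^ s - 1) * (2 * t - 1) := by
      have h1 : S'.card = 2 * d - (p ^ s - 1) := by omega
      rw [h1, h2d]
      have hle1 : p ^ s - 1 ≤ (p ^ s - 1) * (2 * t) := Nat.le_mul_of_pos_right _ (by omega)
      zify [hle1, show (1 : ℕ) ≤ 2 * t by omega]
      ring
    have hWc : W.card = (2 * t - 1) * (p ^ s - p ^ (s - 1)) := by
      have h1 : (p ^ s - 1) * W.card
          = (p ^ s - 1) * ((2 * t - 1) * (p ^ s - p ^ (s - 1))) := by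
        rw [mul_comm (p ^ s - 1) W.card]
        calc W.card * (p ^ s - 1) = T.card := h3a.symm
        _ = S'.card * (p ^ s - p ^ (s - 1)) := h3b
        _ = ((p ^ s - 1) * (2 * t - 1)) * (p ^ s - p ^ (s - 1)) := by rw [hS'c]
        _ = (p ^ s - 1) * ((2 * t - 1) * (p ^ s - p ^ (s - 1))) := by ring
      exact Nat.eq_of_mul_eq_mul_left (by omega) h1
    rw [hnorm, hWc]
    symm
    apply Nat.div_eq_of_eq_mul_left (by omega : 0 < p + 1)
    rw [hssN]
    have hA1 : p ≤ p * p ^ (s - 1) := Nat.le_mul_of_pos_right _ (by omega)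
    have hA2 : p ^ (s - 1) ≤ p * p ^ (s - 1) := Nat.le_mul_of_pos_left _ (by omega)
    zify [show p ≤ 2 * (p * p ^ (s - 1)) by omega, show (1 : ℕ) ≤ p by omega,
      hA2, show (1 : ℕ) ≤ 2 * t by omega]
    linear_combination (-2 * (p : ℤ) ^ (s - 1) * ((p : ℤ) - 1)) * htZ
  · intro hTr0
    have hb1 : b ≠ 1 := fun h => hTr0 (hcaseiff.mpr h)
    rw [if_neg hb1] at hsplitSb
    have hS'c : S'.card = (p ^ s - 1) * (2 * t) := by omega
    have hWc : W.card = 2 * t * (p ^ s - p ^ (s - 1)) := by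
      have h1 : (p ^ s - 1) * W.card
          = (p ^ s - 1) * (2 * t * (p ^ s - p ^ (s - 1))) := by
        rw [mul_comm (p ^ s - 1) W.card]
        calc W.card * (p ^ s - 1) = T.card := h3a.symm
        _ = S'.card * (p ^ s - p ^ (s - 1)) := h3b
        _ = ((p ^ s - 1) * (2 * t)) * (p ^ s - p ^ (s - 1)) := by rw [hS'c]
        _ = (p ^ s - 1) * (2 * t * (p ^ s - p ^ (s - 1))) := by ring
      exact Nat.eq_of_mul_eq_mul_left (by omega) h1
    rw [hnorm, hWc]
    symm
    apply Nat.div_eq_of_eq_mul_left (by omega : 0 < p + 1)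
    rw [hssN]
    have hA2 : p ^ (s - 1) ≤ p * p ^ (s - 1) := Nat.le_mul_of_pos_left _ (by omega)
    zify [hA2, show (1 : ℕ) ≤ p by omega]
    linear_combination (-2 * (p : ℤ) ^ (s - 1) * ((p : ℤ) - 1)) * htZ
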